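/- Let m ≥ 1 be an integer, η > 0, μ > 0, t > 0, p ∈ ℝ³, and let a ∈ ℝ³ be a constant vector. Define the vector field V(x) = (1/(4πμ)) (∫_{B_η(p)} (e^{−t|x−y|}/|x−y|) (η² − |y−p|²)^m dy) · a on ℝ³. Then for every x with |x − p| > η, the curl of V at x equals (η^{2(1+m)}/μ) · a_m(t) · ∇(e^{−t|x−p|}/|x−p|) × a. -/

import Mathlib

open MeasureTheory

noncomputable section

/-- The partial derivative in the `i`-th coordinate direction. -/
def pd (i : Fin 3) (f : EuclideanSpace ℝ (Fin 3) → ℝ) (x : EuclideanSpace ℝ (Fin 3)) : ℝ :=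
  fderiv ℝ f x (EuclideanSpace.single i 1)

/-- The curl of a vector field on `ℝ³`. -/
def curl (F : EuclideanSpace ℝ (Fin 3) → EuclideanSpace ℝ (Fin 3))
    (x : EuclideanSpace ℝ (Fin 3)) : EuclideanSpace ℝ (Fin 3) :=
  (WithLp.equiv 2 (Fin 3 → ℝ)).symm
    ![pd 1 (fun y => F y 2) x - pd 2 (fun y => F y 1) x,
      pd 2 (fun y => F y 0) x - pd 0 (fun y => F y 2) x,
      pd 0 (fun y => F y 1) x - pd 1 (fun y => F y 0) x]

/-- The cross product on `ℝ³`. -/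
def cross (u v : EuclideanSpace ℝ (Fin 3)) : EuclideanSpace ℝ (Fin 3) :=
  (WithLp.equiv 2 (Fin 3 → ℝ)).symm
    ![u 1 * v 2 - u 2 * v 1, u 2 * v 0 - u 0 * v 2, u 0 * v 1 - u 1 * v 0]

/-- `a_m(t) = (1/t) ∫₀¹ s (1 − s²)^m sinh(η t s) ds`. -/
def aCoef (m : ℕ) (η t : ℝ) : ℝ :=
  (1 / t) * ∫ s in (0:ℝ)..1, s * (1 - s ^ 2) ^ m * Real.sinh (η * t * s)

section Helpers

open Set intervalIntegral


-- Lemma 1: integration by parts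
theorem ibp (m : ℕ) (τ : ℝ) :
    ∫ s in (0:ℝ)..1, s * (1 - s ^ 2) ^ m * Real.sinh (τ * s)
      = τ / (2 * (m + 1)) * ∫ s in (0:ℝ)..1, (1 - s ^ 2) ^ (m + 1) * Real.cosh (τ * s) := by
  have key : ∀ s : ℝ, HasDerivAt (fun s : ℝ => -(1 - s ^ 2) ^ (m + 1) * Real.sinh (τ * s) / (2 * (m + 1)))
      (s * (1 - s ^ 2) ^ m * Real.sinh (τ * s)
        - τ / (2 * (m + 1)) * ((1 - s ^ 2) ^ (m + 1) * Real.cosh (τ * s))) s := by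
    intro s
    have h1 : HasDerivAt (fun s : ℝ => (1 - s ^ 2) ^ (m + 1))
        ((m + 1 : ℕ) * (1 - s ^ 2) ^ m * (-(2 * s))) s := by
      have hb : HasDerivAt (fun s : ℝ => 1 - s ^ 2) (-(2 * s)) s := by
        simpa using ((hasDerivAt_pow 2 s).const_sub 1)
      simpa using (hb.fun_pow (m + 1))
    have h2 : HasDerivAt (fun s : ℝ => Real.sinh (τ * s)) (Real.cosh (τ * s) * τ) s := by
      simpa [Function.comp_def] using (Real.hasDerivAt_sinh (τ * s)).comp s ((hasDerivAt_id s).const_mul τ)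
    have := ((h1.fun_mul h2).const_mul (-(1 : ℝ) / (2 * (m + 1))))
    convert! this using 1
    · ext s; push_cast; ring
    · have hne : (2 * ((m : ℝ) + 1)) ≠ 0 := by positivity
      push_cast
      field_simp
      ring
  have hInt : IntervalIntegrable (fun s : ℝ => s * (1 - s ^ 2) ^ m * Real.sinh (τ * s)
      - τ / (2 * (m + 1)) * ((1 - s ^ 2) ^ (m + 1) * Real.cosh (τ * s))) volume 0 1 := by
    apply Continuous.intervalIntegrable; fun_prop
  have := integral_eq_sub_of_hasDerivAt (fun s _ => key s) hInt
  rw [intervalIntegral.integral_sub] at this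
  · have h10 : ((-(1 - (1:ℝ) ^ 2) ^ (m + 1) * Real.sinh (τ * 1) / (2 * (m + 1))) -
        (-(1 - (0:ℝ) ^ 2) ^ (m + 1) * 0 / (2 * (m + 1)))) = 0 := by norm_num
    rw [intervalIntegral.integral_const_mul] at this
    norm_num at this
    linarith [this]
  · apply Continuous.intervalIntegrable; fun_prop
  · apply Continuous.intervalIntegrable; fun_prop


-- Lemma 2: evenization
theorem evenize (m : ℕ) (τ : ℝ) :
    ∫ s in (-1:ℝ)..1, Real.exp (-(τ * s)) * (1 - s ^ 2) ^ (m + 1)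
      = 2 * ∫ s in (0:ℝ)..1, (1 - s ^ 2) ^ (m + 1) * Real.cosh (τ * s) := by
  have hsplit : ∫ s in (-1:ℝ)..1, Real.exp (-(τ * s)) * (1 - s ^ 2) ^ (m + 1)
      = (∫ s in (-1:ℝ)..0, Real.exp (-(τ * s)) * (1 - s ^ 2) ^ (m + 1))
        + ∫ s in (0:ℝ)..1, Real.exp (-(τ * s)) * (1 - s ^ 2) ^ (m + 1) := by
    rw [integral_add_adjacent_intervals] <;>
      · apply Continuous.intervalIntegrable; fun_prop
  have hneg : ∫ s in (-1:ℝ)..0, Real.exp (-(τ * s)) * (1 - s ^ 2) ^ (m + 1)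
      = ∫ s in (0:ℝ)..1, Real.exp (τ * s) * (1 - s ^ 2) ^ (m + 1) := by
    have := intervalIntegral.integral_comp_neg (a := (0:ℝ)) (b := 1)
      (fun s => Real.exp (-(τ * s)) * (1 - s ^ 2) ^ (m + 1))
    rw [show (-0:ℝ) = 0 by norm_num] at this
    rw [← this]
    apply integral_congr
    intro s _
    simp only [neg_sq]
    ring_nf
  rw [hsplit, hneg, ← intervalIntegral.integral_add
    (by apply Continuous.intervalIntegrable; fun_prop)
    (by apply Continuous.intervalIntegrable; fun_prop),
    two_mul, ← intervalIntegral.integral_add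
    (by apply Continuous.intervalIntegrable; fun_prop)
    (by apply Continuous.intervalIntegrable; fun_prop)]
  apply integral_congr
  intro s _
  simp only [Real.cosh_eq]
  ring

-- Lemma 3: polynomial FTC
theorem polyFTC (m : ℕ) (d A a b : ℝ) (hd : 0 < d) :
    ∫ y in a..b, (A - 2 * d * y) ^ m
      = ((A - 2 * d * a) ^ (m + 1) - (A - 2 * d * b) ^ (m + 1)) / (2 * d * (m + 1)) := by
  have key : ∀ y : ℝ, HasDerivAt (fun y : ℝ => -(A - 2 * d * y) ^ (m + 1) / (2 * d * (m + 1)))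
      ((A - 2 * d * y) ^ m) y := by
    intro y
    have hb : HasDerivAt (fun y : ℝ => A - 2 * d * y) (-(2 * d)) y := by
      simpa using ((hasDerivAt_id y).const_mul (2 * d)).const_sub A
    have h1 : HasDerivAt (fun y : ℝ => (A - 2 * d * y) ^ (m + 1))
        ((m + 1 : ℕ) * (A - 2 * d * y) ^ m * (-(2 * d))) y := hb.pow (m + 1)
    have := h1.const_mul (-(1:ℝ) / (2 * d * (m + 1)))
    convert! this using 1
    · ext y; ring
    · have hne : (2 * d * ((m : ℝ) + 1)) ≠ 0 := by positivity
      push_cast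
      field_simp
  rw [integral_eq_sub_of_hasDerivAt (fun y _ => key y)
    (by apply Continuous.intervalIntegrable; fun_prop)]
  ring

-- Lemma 4: linear substitution
theorem linsub (d η : ℝ) (hη : 0 < η) (f : ℝ → ℝ) :
    ∫ u in (d - η)..(d + η), f u = η * ∫ s in (-1:ℝ)..1, f (d + η * s) := by
  have := intervalIntegral.mul_integral_comp_mul_add (a := (-1:ℝ)) (b := 1) (c := η) (d := d) (f := f)
  rw [show η * -1 + d = d - η by ring, show η * 1 + d = d + η by ring] at this
  rw [← this]
  congr 1
  apply integral_congr
  intro s _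
  ring_nf


-- Lemma 5: sqrt substitution
theorem sqrtsub (m : ℕ) (t b c : ℝ) (hb : 0 < b) (hc : 0 ≤ c) :
    ∫ r in (0:ℝ)..Real.sqrt c,
        r * (Real.exp (-(t * Real.sqrt (b ^ 2 + r ^ 2))) / Real.sqrt (b ^ 2 + r ^ 2)) * (c - r ^ 2) ^ m
      = ∫ u in b..Real.sqrt (b ^ 2 + c), Real.exp (-(t * u)) * (b ^ 2 + c - u ^ 2) ^ m := by
  have hpos : ∀ r : ℝ, 0 < b ^ 2 + r ^ 2 := fun r => by positivity
  have hφ : ∀ r : ℝ, HasDerivAt (fun r : ℝ => Real.sqrt (b ^ 2 + r ^ 2))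
      (r / Real.sqrt (b ^ 2 + r ^ 2)) r := by
    intro r
    have h1 : HasDerivAt (fun r : ℝ => b ^ 2 + r ^ 2) (2 * r) r := by
      simpa using (hasDerivAt_pow 2 r).const_add (b ^ 2)
    have := (Real.hasDerivAt_sqrt (hpos r).ne').comp r h1
    convert! this using 1
    field_simp
  have hcont : ContinuousOn (fun r : ℝ => r / Real.sqrt (b ^ 2 + r ^ 2)) (uIcc 0 (Real.sqrt c)) := by
    apply Continuous.continuousOn
    apply Continuous.div continuous_id (by fun_prop)
    intro r
    exact (Real.sqrt_pos.mpr (hpos r)).ne'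
  have hg : Continuous (fun u : ℝ => Real.exp (-(t * u)) * (b ^ 2 + c - u ^ 2) ^ m) := by fun_prop
  have key := intervalIntegral.integral_comp_smul_deriv (f := fun r => Real.sqrt (b ^ 2 + r ^ 2))
    (f' := fun r => r / Real.sqrt (b ^ 2 + r ^ 2)) (g := fun u => Real.exp (-(t * u)) * (b ^ 2 + c - u ^ 2) ^ m)
    (a := 0) (b := Real.sqrt c) (fun r _ => hφ r) hcont hg
  have h0 : Real.sqrt (b ^ 2 + (0:ℝ) ^ 2) = b := by
    rw [show b ^ 2 + (0:ℝ) ^ 2 = b ^ 2 by ring, Real.sqrt_sq hb.le]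
  have h1 : Real.sqrt (b ^ 2 + Real.sqrt c ^ 2) = Real.sqrt (b ^ 2 + c) := by
    rw [Real.sq_sqrt hc]
  simp only [] at key
  rw [h0, h1] at key
  rw [← key]
  apply integral_congr
  intro r _
  have hsq : Real.sqrt (b ^ 2 + r ^ 2) ^ 2 = b ^ 2 + r ^ 2 := Real.sq_sqrt (hpos r).le
  simp only [smul_eq_mul, Function.comp]
  rw [hsq]
  ring_nf

theorem swaplemma (m : ℕ) (t d η : ℝ) (hη : 0 < η) (hd : η < d) :
    ∫ a in (-η)..η, ∫ u in (d - a)..Real.sqrt (d ^ 2 + η ^ 2 - 2 * d * a),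
        Real.exp (-(t * u)) * ((d ^ 2 + η ^ 2 - 2 * d * a) - u ^ 2) ^ m
      = (∫ u in (d - η)..(d + η), Real.exp (-(t * u)) * (η ^ 2 - (u - d) ^ 2) ^ (m + 1))
          / (2 * d * (m + 1)) := by
  have hd0 : 0 < d := hη.trans hd
  set f : ℝ × ℝ → ℝ := fun q => Real.exp (-(t * q.2)) * ((d ^ 2 + η ^ 2 - 2 * d * q.1) - q.2 ^ 2) ^ m with hf
  set S : Set (ℝ × ℝ) := {q | -η < q.1 ∧ q.1 < η ∧ d - q.1 < q.2 ∧ q.2 ^ 2 < d ^ 2 + η ^ 2 - 2 * d * q.1} with hS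
  have hSopen : IsOpen S := by
    have h1 : IsOpen {q : ℝ × ℝ | -η < q.1} := isOpen_lt continuous_const continuous_fst
    have h2 : IsOpen {q : ℝ × ℝ | q.1 < η} := isOpen_lt continuous_fst continuous_const
    have h3 : IsOpen {q : ℝ × ℝ | d - q.1 < q.2} :=
      isOpen_lt (continuous_const.sub continuous_fst) continuous_snd
    have h4 : IsOpen {q : ℝ × ℝ | q.2 ^ 2 < d ^ 2 + η ^ 2 - 2 * d * q.1} :=
      isOpen_lt (continuous_snd.pow 2) (continuous_const.sub (continuous_const.mul continuous_fst))
    exact h1.inter (h2.inter (h3.inter h4))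
  have hSmeas : MeasurableSet S := hSopen.measurableSet
  have hSalt : S = {q : ℝ × ℝ | d - η < q.2 ∧ q.2 < d + η ∧ d - q.2 < q.1 ∧
      q.1 < (d ^ 2 + η ^ 2 - q.2 ^ 2) / (2 * d)} := by
    ext ⟨a, u⟩
    simp only [hS, mem_setOf_eq]
    constructor
    · rintro ⟨h1, h2, h3, h4⟩
      refine ⟨by nlinarith, by nlinarith, by nlinarith, ?_⟩
      rw [lt_div_iff₀ (by positivity)]
      nlinarith
    · rintro ⟨h1, h2, h3, h4⟩
      rw [lt_div_iff₀ (by positivity)] at h4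
      refine ⟨by nlinarith, by nlinarith, by nlinarith, by nlinarith⟩
  have hfint : Integrable (S.indicator f) := by
    rw [integrable_indicator_iff hSmeas]
    apply (ContinuousOn.integrableOn_compact (isCompact_Icc.prod isCompact_Icc)
      (Continuous.continuousOn (by fun_prop))).mono_set
    · rintro ⟨a, u⟩ hq
      simp only [hS, mem_setOf_eq] at hq
      obtain ⟨h1, h2, h3, h4⟩ := hq
      exact ⟨⟨h1.le, h2.le⟩, ⟨(by nlinarith : d - η ≤ u), (by nlinarith : u ≤ d + η)⟩⟩
  have hslice1 : ∀ a : ℝ, (∫ u : ℝ, S.indicator f (a, u))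
      = (Ioo (-η) η).indicator (fun a => ∫ u in (d - a)..Real.sqrt (d ^ 2 + η ^ 2 - 2 * d * a),
          Real.exp (-(t * u)) * ((d ^ 2 + η ^ 2 - 2 * d * a) - u ^ 2) ^ m) a := by
    intro a
    by_cases ha : a ∈ Ioo (-η) η
    · obtain ⟨ha1, ha2⟩ := ha
      have hc : (0:ℝ) < d ^ 2 + η ^ 2 - 2 * d * a := by nlinarith
      have hda : 0 < d - a := by linarith
      have hle : d - a ≤ Real.sqrt (d ^ 2 + η ^ 2 - 2 * d * a) := by
        rw [Real.le_sqrt hda.le hc.le]; nlinarith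
      have hset : (fun u : ℝ => S.indicator f (a, u))
          = (Ioo (d - a) (Real.sqrt (d ^ 2 + η ^ 2 - 2 * d * a))).indicator
              (fun u => Real.exp (-(t * u)) * ((d ^ 2 + η ^ 2 - 2 * d * a) - u ^ 2) ^ m) := by
        ext u
        by_cases hu : u ∈ Ioo (d - a) (Real.sqrt (d ^ 2 + η ^ 2 - 2 * d * a))
        · obtain ⟨hu1, hu2⟩ := hu
          rw [indicator_of_mem (show (a, u) ∈ S by
              exact ⟨ha1, ha2, hu1, (Real.lt_sqrt (by linarith)).mp hu2⟩),
            indicator_of_mem (show u ∈ Ioo (d - a) (Real.sqrt (d ^ 2 + η ^ 2 - 2 * d * a))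
              from ⟨hu1, hu2⟩)]
        · rw [indicator_of_notMem (show (a, u) ∉ S from by
              rintro ⟨_, _, h3, h4⟩
              exact hu ⟨h3, (Real.lt_sqrt (by linarith)).mpr h4⟩),
            indicator_of_notMem hu]
      rw [hset, indicator_of_mem (show a ∈ Ioo (-η) η from ⟨ha1, ha2⟩),
        MeasureTheory.integral_indicator measurableSet_Ioo,
        ← integral_Ioc_eq_integral_Ioo, ← intervalIntegral.integral_of_le hle]
    · rw [indicator_of_notMem ha]
      have hz : ∀ u : ℝ, S.indicator f (a, u) = 0 := by
        intro u
        apply indicator_of_notMem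
        rintro ⟨h1, h2, h3, h4⟩
        simp only [mem_Ioo, not_and_or, not_lt] at ha
        rcases ha with ha | ha
        · nlinarith
        · nlinarith
      rw [funext hz]
      exact MeasureTheory.integral_zero _ _
  have hslice2 : ∀ u : ℝ, (∫ a : ℝ, S.indicator f (a, u))
      = (Ioo (d - η) (d + η)).indicator (fun u => Real.exp (-(t * u)) *
          ((η ^ 2 - (u - d) ^ 2) ^ (m + 1) / (2 * d * (m + 1)))) u := by
    intro u
    by_cases hu : u ∈ Ioo (d - η) (d + η)
    · obtain ⟨hu1, hu2⟩ := hu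
      have hlt : d - u < (d ^ 2 + η ^ 2 - u ^ 2) / (2 * d) := by
        rw [lt_div_iff₀ (by positivity)]; nlinarith
      have hset : (fun a : ℝ => S.indicator f (a, u))
          = (Ioo (d - u) ((d ^ 2 + η ^ 2 - u ^ 2) / (2 * d))).indicator
              (fun a => Real.exp (-(t * u)) * ((d ^ 2 + η ^ 2 - u ^ 2) - 2 * d * a) ^ m) := by
        ext a
        by_cases ha : a ∈ Ioo (d - u) ((d ^ 2 + η ^ 2 - u ^ 2) / (2 * d))
        · rw [indicator_of_mem (show (a, u) ∈ S from by
              rw [hSalt]; exact ⟨hu1, hu2, ha.1, ha.2⟩),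
            indicator_of_mem (show a ∈ Ioo (d - u) ((d ^ 2 + η ^ 2 - u ^ 2) / (2 * d)) from ha)]
          simp only [hf]
          ring_nf
        · rw [indicator_of_notMem (show (a, u) ∉ S from by
              rw [hSalt]
              rintro ⟨_, _, h3, h4⟩
              exact ha ⟨h3, h4⟩), indicator_of_notMem ha]
      rw [hset, indicator_of_mem (show u ∈ Ioo (d - η) (d + η) from ⟨hu1, hu2⟩),
        MeasureTheory.integral_indicator measurableSet_Ioo,
        ← integral_Ioc_eq_integral_Ioo, ← intervalIntegral.integral_of_le hlt.le,
        intervalIntegral.integral_const_mul, polyFTC m d _ _ _ hd0]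
      have e1 : d ^ 2 + η ^ 2 - u ^ 2 - 2 * d * (d - u) = η ^ 2 - (u - d) ^ 2 := by ring
      have e2 : d ^ 2 + η ^ 2 - u ^ 2 - 2 * d * ((d ^ 2 + η ^ 2 - u ^ 2) / (2 * d)) = 0 := by
        field_simp; ring
      rw [e1, e2]
      norm_num
    · rw [indicator_of_notMem hu]
      have hz : ∀ a : ℝ, S.indicator f (a, u) = 0 := by
        intro a
        apply indicator_of_notMem
        rw [hSalt]
        rintro ⟨h1, h2, _, _⟩
        exact hu ⟨h1, h2⟩
      rw [funext hz]
      exact MeasureTheory.integral_zero _ _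
  have huncurry : Integrable (Function.uncurry fun a u => S.indicator f (a, u))
      (volume.prod volume) := hfint
  have lhs_eq : ∫ a in (-η)..η, ∫ u in (d - a)..Real.sqrt (d ^ 2 + η ^ 2 - 2 * d * a),
        Real.exp (-(t * u)) * ((d ^ 2 + η ^ 2 - 2 * d * a) - u ^ 2) ^ m
      = ∫ a : ℝ, ∫ u : ℝ, S.indicator f (a, u) := by
    simp_rw [hslice1]
    rw [intervalIntegral.integral_of_le (by linarith), integral_Ioc_eq_integral_Ioo,
      ← MeasureTheory.integral_indicator measurableSet_Ioo]
  have rhs_eq : ∫ u : ℝ, ∫ a : ℝ, S.indicator f (a, u)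
      = (∫ u in (d - η)..(d + η), Real.exp (-(t * u)) * (η ^ 2 - (u - d) ^ 2) ^ (m + 1))
          / (2 * d * (m + 1)) := by
    simp_rw [hslice2]
    rw [MeasureTheory.integral_indicator measurableSet_Ioo, ← integral_Ioc_eq_integral_Ioo,
      ← intervalIntegral.integral_of_le (by linarith), ← intervalIntegral.integral_div]
    apply integral_congr
    intro u _
    ring
  rw [lhs_eq, integral_integral_swap huncurry, rhs_eq]


abbrev E3 := EuclideanSpace ℝ (Fin 3)

def PsiE : (ℝ × (ℝ × ℝ)) ≃ᵐ E3 :=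
  (MeasurableEquiv.prodCongr (MeasurableEquiv.refl ℝ)
      (MeasurableEquiv.finTwoArrow (α := ℝ)).symm).trans
    ((MeasurableEquiv.piFinSuccAbove (fun _ : Fin 3 => ℝ) 0).symm.trans
      (MeasurableEquiv.toLp 2 (Fin 3 → ℝ)))

def Psi : ℝ × (ℝ × ℝ) → E3 := fun q =>
  (MeasurableEquiv.toLp 2 (Fin 3 → ℝ))
    ((MeasurableEquiv.piFinSuccAbove (fun _ : Fin 3 => ℝ) 0).symm
      (q.1, (MeasurableEquiv.finTwoArrow (α := ℝ)).symm q.2))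

theorem PsiE_coe : ⇑PsiE = Psi := rfl

theorem Psi_mp : MeasurePreserving Psi volume volume := by
  have h1 : MeasurePreserving (Prod.map (id : ℝ → ℝ) ⇑(MeasurableEquiv.finTwoArrow (α := ℝ)).symm)
      (volume.prod volume) (volume.prod volume) :=
    (MeasurePreserving.id volume).prod ((volume_preserving_finTwoArrow ℝ).symm _)
  have h2 := ((volume_preserving_piFinSuccAbove (fun _ : Fin 3 => ℝ) 0).symm _)
  have h3 := ((EuclideanSpace.volume_preserving_symm_measurableEquiv_toLp (Fin 3)).symm _)
  exact (h3.comp (h2.comp h1))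

theorem Psi_apply_0 (q : ℝ × (ℝ × ℝ)) : Psi q 0 = q.1 := by
  simp [Psi, MeasurableEquiv.piFinSuccAbove, MeasurableEquiv.finTwoArrow,
    MeasurableEquiv.coe_toLp]

theorem Psi_apply_1 (q : ℝ × (ℝ × ℝ)) : Psi q 1 = q.2.1 := by
  simp [Psi, MeasurableEquiv.piFinSuccAbove, MeasurableEquiv.finTwoArrow,
    MeasurableEquiv.coe_toLp]

theorem Psi_apply_2 (q : ℝ × (ℝ × ℝ)) : Psi q 2 = q.2.2 := by
  simp [Psi, MeasurableEquiv.piFinSuccAbove, MeasurableEquiv.finTwoArrow,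
    MeasurableEquiv.coe_toLp]

theorem norm_E3 (y : E3) : ‖y‖ = Real.sqrt (y 0 ^ 2 + y 1 ^ 2 + y 2 ^ 2) := by
  rw [EuclideanSpace.norm_eq]
  simp [Fin.sum_univ_three, sq_abs]

-- the reduction to coordinates
theorem reduce1 (m : ℕ) (t η : ℝ) (hη : 0 < η) (v : E3) (hv : η < ‖v‖) :
    ∫ y in Metric.ball (0 : E3) η, Real.exp (-(t * ‖v - y‖)) / ‖v - y‖ * (η ^ 2 - ‖y‖ ^ 2) ^ m
      = ∫ q : ℝ × (ℝ × ℝ),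
          (if q.1 ^ 2 + q.2.1 ^ 2 + q.2.2 ^ 2 < η ^ 2 then
            Real.exp (-(t * Real.sqrt ((‖v‖ - q.1) ^ 2 + q.2.1 ^ 2 + q.2.2 ^ 2)))
              / Real.sqrt ((‖v‖ - q.1) ^ 2 + q.2.1 ^ 2 + q.2.2 ^ 2)
              * (η ^ 2 - (q.1 ^ 2 + q.2.1 ^ 2 + q.2.2 ^ 2)) ^ m
          else 0) := by
  set d := ‖v‖ with hdd
  have hd0 : 0 < d := lt_trans hη hv
  set e₀ : E3 := EuclideanSpace.single (0 : Fin 3) (1 : ℝ) with he₀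
  set w : E3 := d • e₀ with hwdef
  have hw : ‖w‖ = d := by
    rw [hwdef, norm_smul, EuclideanSpace.norm_single]
    simp [abs_of_pos hd0]
  -- rotation
  set K := (ℝ ∙ (v - w))ᗮ with hK
  set R : E3 ≃ₗᵢ[ℝ] E3 := K.reflection with hR
  have hRv : R v = w := Submodule.reflection_sub hw.symm
  have step1 : ∫ y in Metric.ball (0 : E3) η,
        Real.exp (-(t * ‖v - y‖)) / ‖v - y‖ * (η ^ 2 - ‖y‖ ^ 2) ^ m
      = ∫ y, (Metric.ball (0 : E3) η).indicator
          (fun y => Real.exp (-(t * ‖w - y‖)) / ‖w - y‖ * (η ^ 2 - ‖y‖ ^ 2) ^ m) y := by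
    rw [← MeasureTheory.integral_indicator measurableSet_ball]
    rw [← (R.symm.measurePreserving).integral_comp R.symm.toHomeomorph.measurableEmbedding]
    congr 1
    funext y
    have h1 : ‖R.symm y‖ = ‖y‖ := R.symm.norm_map y
    have h2 : ‖v - R.symm y‖ = ‖w - y‖ := by
      rw [← R.norm_map (v - R.symm y), map_sub, hRv, R.apply_symm_apply]
    by_cases hy : y ∈ Metric.ball (0 : E3) η
    · rw [indicator_of_mem (show R.symm y ∈ Metric.ball (0:E3) η by
        simpa [Metric.mem_ball, dist_zero_right, h1] using hy),
        indicator_of_mem hy, h1, h2]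
    · rw [indicator_of_notMem (show R.symm y ∉ Metric.ball (0:E3) η by
        simpa [Metric.mem_ball, dist_zero_right, h1] using hy),
        indicator_of_notMem hy]
  rw [step1, ← Psi_mp.integral_comp PsiE.measurableEmbedding]
  congr 1
  funext q
  have hnq : ‖Psi q‖ = Real.sqrt (q.1 ^ 2 + q.2.1 ^ 2 + q.2.2 ^ 2) := by
    rw [norm_E3, Psi_apply_0, Psi_apply_1, Psi_apply_2]
  have hw0 : w 0 = d := by
    rw [hwdef, he₀]
    simp [EuclideanSpace.single_apply]
  have hw1 : w 1 = 0 := by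
    rw [hwdef, he₀]; simp [EuclideanSpace.single_apply]
  have hw2 : w 2 = 0 := by
    rw [hwdef, he₀]; simp [EuclideanSpace.single_apply]
  have hsub : ∀ i : Fin 3, (w - Psi q) i = w i - Psi q i := fun i => rfl
  have hnwq : ‖w - Psi q‖ = Real.sqrt ((d - q.1) ^ 2 + q.2.1 ^ 2 + q.2.2 ^ 2) := by
    rw [norm_E3, hsub 0, hsub 1, hsub 2, hw0, hw1, hw2, Psi_apply_0, Psi_apply_1, Psi_apply_2]
    ring_nf
  have hsum : (0:ℝ) ≤ q.1 ^ 2 + q.2.1 ^ 2 + q.2.2 ^ 2 := by positivity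
  by_cases hq : q.1 ^ 2 + q.2.1 ^ 2 + q.2.2 ^ 2 < η ^ 2
  · rw [if_pos hq, indicator_of_mem (show Psi q ∈ Metric.ball (0:E3) η by
      rw [Metric.mem_ball, dist_zero_right, hnq]
      exact (Real.sqrt_lt' hη).mpr hq)]
    rw [hnq, hnwq, Real.sq_sqrt hsum]
  · rw [if_neg hq, indicator_of_notMem (show Psi q ∉ Metric.ball (0:E3) η by
      rw [Metric.mem_ball, dist_zero_right, hnq]
      intro hcon
      exact hq ((Real.sqrt_lt' hη).mp hcon))]

theorem reduce2 (m : ℕ) (t η d : ℝ) (hη : 0 < η) (hd : η < d) :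
    ∫ q : ℝ × (ℝ × ℝ),
        (if q.1 ^ 2 + q.2.1 ^ 2 + q.2.2 ^ 2 < η ^ 2 then
          Real.exp (-(t * Real.sqrt ((d - q.1) ^ 2 + q.2.1 ^ 2 + q.2.2 ^ 2)))
            / Real.sqrt ((d - q.1) ^ 2 + q.2.1 ^ 2 + q.2.2 ^ 2)
            * (η ^ 2 - (q.1 ^ 2 + q.2.1 ^ 2 + q.2.2 ^ 2)) ^ m
        else 0)
      = (2 * Real.pi) * ∫ a in (-η)..η, ∫ u in (d - a)..Real.sqrt (d ^ 2 + η ^ 2 - 2 * d * a),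
          Real.exp (-(t * u)) * ((d ^ 2 + η ^ 2 - 2 * d * a) - u ^ 2) ^ m := by
  have hd0 : 0 < d := lt_trans hη hd
  set g : ℝ × (ℝ × ℝ) → ℝ := fun q =>
    Real.exp (-(t * Real.sqrt ((d - q.1) ^ 2 + q.2.1 ^ 2 + q.2.2 ^ 2)))
      / Real.sqrt ((d - q.1) ^ 2 + q.2.1 ^ 2 + q.2.2 ^ 2)
      * (η ^ 2 - (q.1 ^ 2 + q.2.1 ^ 2 + q.2.2 ^ 2)) ^ m with hg
  set T : Set (ℝ × (ℝ × ℝ)) := {q | q.1 ^ 2 + q.2.1 ^ 2 + q.2.2 ^ 2 < η ^ 2} with hT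
  have hTmeas : MeasurableSet T :=
    (isOpen_lt (by fun_prop) continuous_const).measurableSet
  have hite : ∀ q, (if q.1 ^ 2 + q.2.1 ^ 2 + q.2.2 ^ 2 < η ^ 2 then g q else 0)
      = T.indicator g q := by
    intro q
    by_cases hq : q ∈ T
    · rw [indicator_of_mem hq]; exact if_pos hq
    · rw [indicator_of_notMem hq]; exact if_neg hq
  -- integrability
  have hint : Integrable (T.indicator g) := by
    rw [integrable_indicator_iff hTmeas]
    have hC : IsCompact ((Icc (-η) η) ×ˢ ((Icc (-η) η) ×ˢ (Icc (-η) η))) :=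
      (isCompact_Icc.prod (isCompact_Icc.prod isCompact_Icc))
    apply (ContinuousOn.integrableOn_compact hC ?_).mono_set
    · rintro ⟨a, b, c⟩ hq
      simp only [hT, mem_setOf_eq] at hq
      have h1 : a ^ 2 < η ^ 2 := by nlinarith
      have h2 : b ^ 2 < η ^ 2 := by nlinarith
      have h3 : c ^ 2 < η ^ 2 := by nlinarith
      refine ⟨⟨?_, ?_⟩, ⟨?_, ?_⟩, ⟨?_, ?_⟩⟩ <;> nlinarith
    · have hden : ∀ q ∈ (Icc (-η) η) ×ˢ ((Icc (-η) η) ×ˢ (Icc (-η) η)),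
          Real.sqrt ((d - q.1) ^ 2 + q.2.1 ^ 2 + q.2.2 ^ 2) ≠ 0 := by
        rintro ⟨a, b, c⟩ ⟨⟨ha1, ha2⟩, _⟩
        have : (0:ℝ) < (d - a) ^ 2 + b ^ 2 + c ^ 2 := by nlinarith
        exact (Real.sqrt_pos.mpr this).ne'
      exact (ContinuousOn.div (Continuous.continuousOn (by fun_prop))
        (Continuous.continuousOn (by fun_prop)) hden).mul (Continuous.continuousOn (by fun_prop))
  rw [integral_congr_ae (Filter.Eventually.of_forall hite)]
  -- Fubini
  rw [show (volume : Measure (ℝ × (ℝ × ℝ))) = volume.prod volume from rfl] at hint ⊢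
  rw [integral_prod _ hint]
  -- inner integral via polar coordinates
  set W : ℝ → ℝ := fun a => ∫ u in (d - a)..Real.sqrt (d ^ 2 + η ^ 2 - 2 * d * a),
      Real.exp (-(t * u)) * ((d ^ 2 + η ^ 2 - 2 * d * a) - u ^ 2) ^ m with hW
  have inner_eq : ∀ a : ℝ, (∫ p : ℝ × ℝ, T.indicator g (a, p))
      = (Ioo (-η) η).indicator W a * (2 * Real.pi) := by
    intro a
    set g1 : ℝ → ℝ := fun r =>
      if a ^ 2 + r ^ 2 < η ^ 2 then
        Real.exp (-(t * Real.sqrt ((d - a) ^ 2 + r ^ 2))) / Real.sqrt ((d - a) ^ 2 + r ^ 2)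
          * (η ^ 2 - (a ^ 2 + r ^ 2)) ^ m
      else 0 with hg1
    have hpol := integral_comp_polarCoord_symm (fun p : ℝ × ℝ => T.indicator g (a, p))
    rw [← hpol]
    have hpt : ∀ p : ℝ × ℝ, p.1 • T.indicator g (a, polarCoord.symm p)
        = (fun r => r * g1 r) p.1 * (fun _ : ℝ => (1:ℝ)) p.2 := by
      intro p
      have hsymm : polarCoord.symm p = (p.1 * Real.cos p.2, p.1 * Real.sin p.2) := rfl
      have htrig : (p.1 * Real.cos p.2) ^ 2 + (p.1 * Real.sin p.2) ^ 2 = p.1 ^ 2 := by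
        have := Real.sin_sq_add_cos_sq p.2
        nlinarith
      have e1 : a ^ 2 + (p.1 * Real.cos p.2) ^ 2 + (p.1 * Real.sin p.2) ^ 2
          = a ^ 2 + p.1 ^ 2 := by nlinarith [Real.sin_sq_add_cos_sq p.2]
      have e2 : (d - a) ^ 2 + (p.1 * Real.cos p.2) ^ 2 + (p.1 * Real.sin p.2) ^ 2
          = (d - a) ^ 2 + p.1 ^ 2 := by nlinarith [Real.sin_sq_add_cos_sq p.2]
      rw [hsymm]
      simp only [smul_eq_mul, mul_one, hg1]
      by_cases hcond : a ^ 2 + p.1 ^ 2 < η ^ 2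
      · have hmem : (a, (p.1 * Real.cos p.2, p.1 * Real.sin p.2)) ∈ T := by
          show a ^ 2 + (p.1 * Real.cos p.2) ^ 2 + (p.1 * Real.sin p.2) ^ 2 < η ^ 2
          rw [e1]; exact hcond
        rw [indicator_of_mem hmem, if_pos hcond]
        simp only [hg]
        rw [e1, e2]
      · have hmem : (a, (p.1 * Real.cos p.2, p.1 * Real.sin p.2)) ∉ T := by
          show ¬(a ^ 2 + (p.1 * Real.cos p.2) ^ 2 + (p.1 * Real.sin p.2) ^ 2 < η ^ 2)
          rw [e1]; exact hcond
        rw [indicator_of_notMem hmem, if_neg hcond, mul_zero]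
    calc ∫ p in polarCoord.target, p.1 • T.indicator g (a, polarCoord.symm p)
        = ∫ p in polarCoord.target, (fun r => r * g1 r) p.1 * (fun _ : ℝ => (1:ℝ)) p.2 := by
          exact setIntegral_congr_fun polarCoord.open_target.measurableSet
            (fun p _ => hpt p)
      _ = (∫ r in Ioi (0:ℝ), r * g1 r) * (∫ _ in Ioo (-Real.pi) Real.pi, (1:ℝ)) := by
          rw [show polarCoord.target = Ioi (0:ℝ) ×ˢ Ioo (-Real.pi) Real.pi from rfl,
            show (volume : Measure (ℝ × ℝ)) = volume.prod volume from rfl]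
          exact setIntegral_prod_mul (L := ℝ) (fun r => r * g1 r) (fun _ => (1:ℝ)) _ _
      _ = (∫ r in Ioi (0:ℝ), r * g1 r) * (2 * Real.pi) := by
          rw [setIntegral_const, smul_eq_mul, mul_one,
            Real.volume_real_Ioo_of_le (by nlinarith [Real.pi_pos] : -Real.pi ≤ Real.pi)]
          ring
      _ = (Ioo (-η) η).indicator W a * (2 * Real.pi) := by
          congr 1
          by_cases ha : a ∈ Ioo (-η) η
          · obtain ⟨ha1, ha2⟩ := ha
            have hb : 0 < d - a := by linarith
            have hc : 0 < η ^ 2 - a ^ 2 := by nlinarith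
            have hstep : ∀ r ∈ Ioi (0:ℝ), r * g1 r
                = (Ioo 0 (Real.sqrt (η ^ 2 - a ^ 2))).indicator
                    (fun r => r * (Real.exp (-(t * Real.sqrt ((d - a) ^ 2 + r ^ 2)))
                      / Real.sqrt ((d - a) ^ 2 + r ^ 2)) * ((η ^ 2 - a ^ 2) - r ^ 2) ^ m) r := by
              intro r hr
              have hr0 : (0:ℝ) < r := hr
              simp only [hg1]
              by_cases hcond : a ^ 2 + r ^ 2 < η ^ 2
              · rw [if_pos hcond, indicator_of_mem
                  (show r ∈ Ioo 0 (Real.sqrt (η ^ 2 - a ^ 2)) from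
                    ⟨hr0, (Real.lt_sqrt hr0.le).mpr (by nlinarith)⟩)]
                ring
              · rw [if_neg hcond, indicator_of_notMem (show
                    r ∉ Ioo 0 (Real.sqrt (η ^ 2 - a ^ 2)) from by
                  rintro ⟨h1, h2⟩
                  exact hcond (by nlinarith [(Real.lt_sqrt hr0.le).mp h2]))]
                ring
            rw [setIntegral_congr_fun measurableSet_Ioi hstep,
              setIntegral_indicator measurableSet_Ioo,
              Set.inter_eq_self_of_subset_right Ioo_subset_Ioi_self,
              ← integral_Ioc_eq_integral_Ioo,
              ← intervalIntegral.integral_of_le (Real.sqrt_nonneg _),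
              sqrtsub m t (d - a) (η ^ 2 - a ^ 2) hb hc.le]
            rw [indicator_of_mem (show a ∈ Ioo (-η) η from ⟨ha1, ha2⟩), hW]
            rw [show (d - a) ^ 2 + (η ^ 2 - a ^ 2) = d ^ 2 + η ^ 2 - 2 * d * a by ring]
          · rw [indicator_of_notMem ha]
            have hz : ∀ r ∈ Ioi (0:ℝ), r * g1 r = 0 := by
              intro r hr
              have : ¬(a ^ 2 + r ^ 2 < η ^ 2) := by
                simp only [mem_Ioo, not_and_or, not_lt] at ha
                rcases ha with ha | ha <;> nlinarith [mem_Ioi.mp hr]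
              simp only [hg1]
              rw [if_neg this, mul_zero]
            rw [setIntegral_congr_fun measurableSet_Ioi hz]
            simp
  simp_rw [inner_eq]
  rw [MeasureTheory.integral_mul_const, MeasureTheory.integral_indicator measurableSet_Ioo,
    ← integral_Ioc_eq_integral_Ioo, ← intervalIntegral.integral_of_le (by linarith)]
  ring

-- Step I: from the swapped double integral to the closed form
theorem assemble (m : ℕ) (t d η : ℝ) (hη : 0 < η) (ht : 0 < t) (hd : η < d) :
    (2 * Real.pi) * ((∫ u in (d - η)..(d + η),
          Real.exp (-(t * u)) * (η ^ 2 - (u - d) ^ 2) ^ (m + 1)) / (2 * d * (m + 1)))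
      = (4 * Real.pi * η ^ (2 * (1 + m)) * aCoef m η t) * (Real.exp (-(t * d)) / d) := by
  have hd0 : 0 < d := lt_trans hη hd
  have hQ : ∫ u in (d - η)..(d + η), Real.exp (-(t * u)) * (η ^ 2 - (u - d) ^ 2) ^ (m + 1)
      = η * (Real.exp (-(t * d)) * η ^ (2 * (m + 1)) *
          ∫ s in (-1:ℝ)..1, Real.exp (-(η * t * s)) * (1 - s ^ 2) ^ (m + 1)) := by
    rw [linsub d η hη (fun u => Real.exp (-(t * u)) * (η ^ 2 - (u - d) ^ 2) ^ (m + 1))]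
    congr 1
    rw [← intervalIntegral.integral_const_mul]
    apply integral_congr
    intro s _
    simp only []
    have e1 : -(t * (d + η * s)) = -(t * d) + -(η * t * s) := by ring
    rw [e1, Real.exp_add]
    have e2 : (η ^ 2 - (d + η * s - d) ^ 2) = η ^ 2 * (1 - s ^ 2) := by ring
    rw [e2, mul_pow, ← pow_mul]
    ring
  rw [hQ, evenize m (η * t)]
  -- now express aCoef
  have haCoef : aCoef m η t = η / (2 * (m + 1)) *
      ∫ s in (0:ℝ)..1, (1 - s ^ 2) ^ (m + 1) * Real.cosh (η * t * s) := by
    rw [aCoef, ibp m (η * t)]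
    field_simp
  rw [haCoef]
  have hm1 : ((m : ℝ) + 1) ≠ 0 := by positivity
  have h2m : (2 * (1 + m)) = 2 * (m + 1) := by ring
  rw [h2m]
  field_simp
  ring

theorem ball_int (m : ℕ) (η t : ℝ) (hη : 0 < η) (ht : 0 < t) (v : E3) (hv : η < ‖v‖) :
    ∫ y in Metric.ball (0 : E3) η, Real.exp (-(t * ‖v - y‖)) / ‖v - y‖ * (η ^ 2 - ‖y‖ ^ 2) ^ m
      = (4 * Real.pi * η ^ (2 * (1 + m)) * aCoef m η t) * (Real.exp (-(t * ‖v‖)) / ‖v‖) := by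
  rw [reduce1 m t η hη v hv, reduce2 m t η ‖v‖ hη hv, swaplemma m t ‖v‖ η hη hv,
    assemble m t ‖v‖ η hη ht hv]

theorem grad_component (f : E3 → ℝ) (x : E3) (i : Fin 3) :
    gradient f x i = fderiv ℝ f x (EuclideanSpace.single i 1) := by
  have h1 : gradient f x i = @inner ℝ _ _ (EuclideanSpace.single i (1:ℝ)) (gradient f x) := by
    rw [EuclideanSpace.inner_single_left]
    simp
  rw [h1, real_inner_comm, gradient, InnerProductSpace.toDual_symm_apply]

end Helpers

theorem stmt_15 (m : ℕ) (hm : 1 ≤ m) (η μ t : ℝ) (hη : 0 < η) (hμ : 0 < μ) (ht : 0 < t)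
    (p a : EuclideanSpace ℝ (Fin 3))
    (V : EuclideanSpace ℝ (Fin 3) → EuclideanSpace ℝ (Fin 3))
    (hV : ∀ x, V x =
      ((1 / (4 * Real.pi * μ)) *
        ∫ y in Metric.ball p η,
          Real.exp (-t * ‖x - y‖) / ‖x - y‖ * (η ^ 2 - ‖y - p‖ ^ 2) ^ m) • a)
    (x : EuclideanSpace ℝ (Fin 3)) (hx : η < ‖x - p‖) :
    curl V x = ((η ^ (2 * (1 + m)) / μ) * aCoef m η t) •
      cross (gradient (fun z => Real.exp (-t * ‖z - p‖) / ‖z - p‖) x) a := by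
  set K : ℝ := 4 * Real.pi * η ^ (2 * (1 + m)) * aCoef m η t with hK
  set gfun : E3 → ℝ := fun z => Real.exp (-t * ‖z - p‖) / ‖z - p‖ with hgfun
  -- the integral representation near x
  have key : ∀ z : E3, η < ‖z - p‖ →
      (∫ y in Metric.ball p η,
        Real.exp (-t * ‖z - y‖) / ‖z - y‖ * (η ^ 2 - ‖y - p‖ ^ 2) ^ m) = K * gfun z := by
    intro z hz
    have h1 : (∫ y in Metric.ball p η,
          Real.exp (-t * ‖z - y‖) / ‖z - y‖ * (η ^ 2 - ‖y - p‖ ^ 2) ^ m)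
        = ∫ y in Metric.ball (0 : E3) η,
            Real.exp (-(t * ‖(z - p) - y‖)) / ‖(z - p) - y‖ * (η ^ 2 - ‖y‖ ^ 2) ^ m := by
      rw [← MeasureTheory.integral_indicator measurableSet_ball,
        ← MeasureTheory.integral_indicator measurableSet_ball,
        ← integral_add_right_eq_self (fun y => (Metric.ball p η).indicator
          (fun y => Real.exp (-t * ‖z - y‖) / ‖z - y‖ * (η ^ 2 - ‖y - p‖ ^ 2) ^ m) y) p]
      congr 1
      funext w
      have hmem : w + p ∈ Metric.ball p η ↔ w ∈ Metric.ball (0 : E3) η := by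
        simp [Metric.mem_ball, dist_eq_norm]
      have hv1 : z - (w + p) = (z - p) - w := by abel
      have hv2 : w + p - p = w := by abel
      by_cases hw : w ∈ Metric.ball (0 : E3) η
      · rw [Set.indicator_of_mem (hmem.mpr hw), Set.indicator_of_mem hw, hv1, hv2, neg_mul]
      · rw [Set.indicator_of_notMem (fun hc => hw (hmem.mp hc)), Set.indicator_of_notMem hw]
    rw [h1, ball_int m η t hη ht (z - p) hz, ← hK]
    simp only [hgfun]
    rw [neg_mul]
  -- differentiability of gfun at x
  have hxp : x - p ≠ 0 := by
    intro hc
    rw [hc] at hx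
    simp at hx
    linarith
  have hnne : ‖x - p‖ ≠ 0 := by
    simp [hxp]
  have hnormd : DifferentiableAt ℝ (fun z : E3 => ‖z - p‖) x :=
    DifferentiableAt.norm ℝ (differentiableAt_id.sub (differentiableAt_const p)) hxp
  have hgd : DifferentiableAt ℝ gfun x := by
    rw [hgfun]
    have h1 : DifferentiableAt ℝ (fun z : E3 => Real.exp (-t * ‖z - p‖)) x :=
      (hnormd.const_mul (-t)).exp
    have h2 : DifferentiableAt ℝ (fun z : E3 => (‖z - p‖)⁻¹) x := hnormd.inv hnne
    simp only [div_eq_mul_inv]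
    exact h1.mul h2
  -- eventual equality
  set c₀ : ℝ := (1 / (4 * Real.pi * μ)) * K with hc₀
  have hev : ∀ j : Fin 3, (fun z => V z j) =ᶠ[nhds x] fun z => (c₀ * a j) * gfun z := by
    intro j
    have hU : IsOpen {z : E3 | η < ‖z - p‖} :=
      isOpen_lt continuous_const ((continuous_id.sub continuous_const).norm)
    filter_upwards [hU.mem_nhds hx] with z hz
    rw [hV z, key z hz]
    simp only [PiLp.smul_apply, smul_eq_mul]
    ring
  have hpd : ∀ i j : Fin 3, pd i (fun z => V z j) x
      = (c₀ * a j) * fderiv ℝ gfun x (EuclideanSpace.single i 1) := by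
    intro i j
    rw [pd, (hev j).fderiv_eq, fderiv_const_mul hgd (c₀ * a j)]
    simp
  have hgr : ∀ i : Fin 3, gradient gfun x i = fderiv ℝ gfun x (EuclideanSpace.single i 1) :=
    grad_component gfun x
  have hc : c₀ = (η ^ (2 * (1 + m)) / μ) * aCoef m η t := by
    rw [hc₀, hK]
    field_simp
  ext i
  have hcomp : ∀ (v : Fin 3 → ℝ) (i : Fin 3), (WithLp.equiv 2 (Fin 3 → ℝ)).symm v i = v i :=
    fun v i => rfl
  rw [curl, cross]
  fin_cases i <;>
  · simp only [hcomp, Fin.zero_eta, Fin.mk_one, show (⟨2, by omega⟩ : Fin 3) = 2 from rfl,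
      Fin.isValue, Matrix.cons_val_zero,
      Matrix.cons_val_one, Matrix.head_cons, Matrix.cons_val_two, Matrix.tail_cons,
      PiLp.smul_apply, smul_eq_mul, hpd, hgr, hc]
    ring
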